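/- Let R be a commutative ring. Every τ_q-flat R-module is flat if and only if R is a DQ-ring, i.e., if and only if every finitely generated semi-regular ideal of R is equal to R. -/

import Mathlib

open Polynomial TensorProduct

universe u v

/-- An ideal is *semi-regular* if it contains a finitely generated dense subideal
(an ideal is *dense* if its annihilator is zero). -/
def Ideal.IsSemiregular {R : Type*} [CommRing R] (I : Ideal R) : Prop :=
  ∃ J : Ideal R, J ≤ I ∧ J.FG ∧ Submodule.annihilator J = ⊥

/-- A module is *Q-torsion* if every element is annihilated by some finitely
generated semi-regular ideal. -/
def IsQTorsion (R : Type*) (M : Type*) [CommRing R] [AddCommGroup M] [Module R M] : Prop :=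
  ∀ m : M, ∃ I : Ideal R, I.FG ∧ I.IsSemiregular ∧ ∀ a ∈ I, a • m = 0

open CategoryTheory in
/-- `Tor_1^R(M, N)` as an `R`-module. -/
noncomputable def Tor1Mod (R : Type u) [CommRing R] (M N : Type u)
    [AddCommGroup M] [Module R M] [AddCommGroup N] [Module R N] : ModuleCat R :=
  ((Tor (ModuleCat.{u} R) 1).obj (ModuleCat.of R M)).obj (ModuleCat.of R N)

/-- A module is *τ_q-flat* if `Tor_1^R(M, N)` is Q-torsion for every module `N`. -/
def IsTauQFlat (R : Type u) [CommRing R] (M : Type u) [AddCommGroup M] [Module R M] : Prop :=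
  ∀ (N : Type u) [AddCommGroup N] [Module R N], IsQTorsion R (Tor1Mod R M N)

/-! ### Auxiliary machinery: a concrete description of `Tor_1` via a chosen
projective resolution. -/

namespace StatementElevenAux

open CategoryTheory MonoidalCategory HomologicalComplex

noncomputable section

variable {R : Type u} [CommRing R]

/-- The complex `M ⊗ P` obtained by tensoring a projective resolution `P` by `M`
on the left. -/
def torCx (M : ModuleCat.{u} R) {N : ModuleCat.{u} R} (P : ProjectiveResolution N) :
    ChainComplex (ModuleCat.{u} R) ℕ :=
  (((tensoringLeft (ModuleCat.{u} R)).obj M).mapHomologicalComplex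
    (ComplexShape.down ℕ)).obj P.complex

/-- The short complex `M ⊗ P₂ ⟶ M ⊗ P₁ ⟶ M ⊗ P₀`. -/
def torSC (M : ModuleCat.{u} R) {N : ModuleCat.{u} R} (P : ProjectiveResolution N) :
    CategoryTheory.ShortComplex (ModuleCat.{u} R) :=
  (torCx M P).sc' 2 1 0

set_option maxHeartbeats 1000000 in
/-- `Tor₁(M, N)` is the concrete homology of `M ⊗ P` in degree 1. -/
def torIso (M N : Type u) [AddCommGroup M] [Module R M] [AddCommGroup N] [Module R N]
    (P : ProjectiveResolution (ModuleCat.of R N)) :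
    Tor1Mod R M N ≅ (torSC (ModuleCat.of R M) P).moduleCatLeftHomologyData.H :=
  P.isoLeftDerivedObj ((tensoringLeft _).obj (ModuleCat.of R M)) 1 ≪≫
    CategoryTheory.ShortComplex.homologyMapIso
      ((torCx (ModuleCat.of R M) P).isoSc' 2 1 0 (by simp) (by simp)) ≪≫
    (torSC (ModuleCat.of R M) P).moduleCatHomologyIso

/-! ### Part A : `Tor₁(M, N)` is annihilated by any `a` annihilating `M`. -/

lemma smul_torSC_X₂_eq_zero {M : ModuleCat.{u} R} (a : R) (hM : ∀ m : M, a • m = 0)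
    {N : ModuleCat.{u} R} (P : ProjectiveResolution N) (x : (torSC M P).X₂) : a • x = 0 := by
  show a • x = (0 : (M ⊗ P.complex.X 1 : ModuleCat R))
  have : ∀ y : (M ⊗ P.complex.X 1 : ModuleCat R), a • y = 0 := by
    intro y
    refine TensorProduct.induction_on y (by simp) (fun m n => ?_) (fun p q hp hq => ?_)
    · show a • (m ⊗ₜ[R] n) = 0
      rw [TensorProduct.smul_tmul', hM m, TensorProduct.zero_tmul]
    · rw [smul_add, hp, hq, add_zero]
  exact this x

lemma smul_homology_eq_zero {M : ModuleCat.{u} R} (a : R) (hM : ∀ m : M, a • m = 0)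
    {N : ModuleCat.{u} R} (P : ProjectiveResolution N)
    (h : (torSC M P).moduleCatLeftHomologyData.H) : a • h = 0 := by
  obtain ⟨k, rfl⟩ := Submodule.Quotient.mk_surjective _ h
  have : a • k = 0 := Subtype.ext (by
    show a • (k : (torSC M P).X₂) = 0
    exact smul_torSC_X₂_eq_zero a hM P _)
  exact (Submodule.Quotient.mk_smul _ a k).symm.trans
    ((congrArg _ this).trans (Submodule.Quotient.mk_zero _))

lemma tor1_smul_eq_zero {M : Type u} [AddCommGroup M] [Module R M] (a : R)
    (hM : ∀ m : M, a • m = 0) (N : Type u) [AddCommGroup N] [Module R N]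
    (x : Tor1Mod R M N) : a • x = 0 := by
  obtain ⟨P⟩ := HasProjectiveResolution.out (Z := ModuleCat.of R N)
  have e := torIso (R := R) M N P
  have h0 : a • e.hom x = 0 := smul_homology_eq_zero a hM P (e.hom x)
  have h1 : e.hom (a • x) = 0 := by rw [map_smul]; exact h0
  have hinj : Function.Injective e.hom := (ModuleCat.mono_iff_injective e.hom).mp inferInstance
  exact hinj (by rw [h1, map_zero])

/-! ### Part B : a spliced projective resolution of `R ⧸ I`. -/

lemma d_comp_pi_zero {K : ChainComplex (ModuleCat.{u} R) ℕ} {Z : ModuleCat.{u} R}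
    (π : K ⟶ (ChainComplex.single₀ (ModuleCat.{u} R)).obj Z) :
    K.d 1 0 ≫ (π.f 0 : K.X 0 ⟶ Z) = 0 := by
  rw [← π.comm 1 0, HomologicalComplex.single_obj_d, Limits.comp_zero]

lemma quasiIsoAt_zero_iff_moduleCat {K : ChainComplex (ModuleCat.{u} R) ℕ} {Z : ModuleCat.{u} R}
    (π : K ⟶ (ChainComplex.single₀ (ModuleCat.{u} R)).obj Z) :
    QuasiIsoAt π 0 ↔
      ((ShortComplex.mk (K.d 1 0) (π.f 0 : K.X 0 ⟶ Z) (d_comp_pi_zero π)).Exact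
        ∧ Epi (π.f 0 : K.X 0 ⟶ Z)) := by
  rw [quasiIsoAt_iff' π 1 0 0 (by simp) (by simp)]
  exact ShortComplex.quasiIso_iff_of_zeros'
    ((HomologicalComplex.shortComplexFunctor' (ModuleCat.{u} R) _ 1 0 0).map π)
    (K.shape 0 0 (by simp))
    (HomologicalComplex.single_obj_d (ComplexShape.down ℕ) 0 Z 1 0)
    (HomologicalComplex.single_obj_d (ComplexShape.down ℕ) 0 Z 0 0)

variable (I : Ideal R) (Q : ProjectiveResolution (ModuleCat.of R ↥I))

/-- Degreewise objects of the spliced resolution of `R ⧸ I`. -/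
def splX : ℕ → ModuleCat.{u} R
  | 0 => ModuleCat.of R R
  | (n+1) => Q.complex.X n

/-- Differentials of the spliced resolution. -/
def splD : ∀ n : ℕ, splX I Q (n+1) ⟶ splX I Q n
  | 0 => (Q.π.f 0 : Q.complex.X 0 ⟶ ModuleCat.of R ↥I) ≫ ModuleCat.ofHom I.subtype
  | (n+1) => Q.complex.d (n+1) n

lemma splD_sq : ∀ n : ℕ, splD I Q (n+1) ≫ splD I Q n = 0 := by
  rintro (_|n)
  · show Q.complex.d 1 0 ≫ (Q.π.f 0 : Q.complex.X 0 ⟶ ModuleCat.of R ↥I) ≫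
      ModuleCat.ofHom I.subtype = 0
    exact (Category.assoc _ _ _).symm.trans
      ((congrArg (· ≫ ModuleCat.ofHom I.subtype) Q.complex_d_comp_π_f_zero).trans
        Limits.zero_comp)
  · exact Q.complex.d_comp_d _ _ _

/-- The spliced chain complex `⋯ ⟶ Q₁ ⟶ Q₀ ⟶ R`. -/
def splCx : ChainComplex (ModuleCat.{u} R) ℕ :=
  ChainComplex.of (splX I Q) (splD I Q) (splD_sq I Q)

lemma splCx_d_one_zero : (splCx I Q).d 1 0 =
    (Q.π.f 0 : Q.complex.X 0 ⟶ ModuleCat.of R ↥I) ≫ ModuleCat.ofHom I.subtype :=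
  ChainComplex.of_d (splX I Q) (splD I Q) 0

lemma splCx_d_succ (n : ℕ) : (splCx I Q).d (n+2) (n+1) = Q.complex.d (n+1) n :=
  ChainComplex.of_d _ _ (n+1)

/-- The augmentation map to `R ⧸ I`. -/
def splπ : splCx I Q ⟶ (ChainComplex.single₀ (ModuleCat.{u} R)).obj (ModuleCat.of R (R ⧸ I)) :=
  (ChainComplex.toSingle₀Equiv _ _).symm ⟨ModuleCat.ofHom I.mkQ, by
    rw [splCx_d_one_zero]
    ext x
    show I.mkQ (I.subtype (Q.π.f 0 x)) = 0
    exact (Submodule.Quotient.mk_eq_zero I).mpr (Q.π.f 0 x).2⟩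

lemma splπ_f_zero : (splπ I Q).f 0 = ModuleCat.ofHom I.mkQ :=
  ChainComplex.toSingle₀Equiv_symm_apply_f_zero _ _

lemma Qaug_exact :
    (ShortComplex.mk (Q.complex.d 1 0) (Q.π.f 0 : Q.complex.X 0 ⟶ ModuleCat.of R ↥I)
      (d_comp_pi_zero Q.π)).Exact ∧ Epi (Q.π.f 0 : Q.complex.X 0 ⟶ ModuleCat.of R ↥I) :=
  (quasiIsoAt_zero_iff_moduleCat Q.π).mp inferInstance

/-- The spliced projective resolution of `R ⧸ I`. -/
def splRes : ProjectiveResolution (ModuleCat.of R (R ⧸ I)) where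
  complex := splCx I Q
  projective := by
    rintro (_|n)
    · exact (IsProjective.iff_projective.{u, u} _).mp inferInstance
    · exact Q.projective n
  π := splπ I Q
  quasiIso := ⟨by
    rintro (_|n)
    · rw [quasiIsoAt_zero_iff_moduleCat]
      constructor
      · rw [ShortComplex.moduleCat_exact_iff]
        intro x hx
        have hx2 : (ModuleCat.ofHom I.mkQ) x = 0 := by
          rw [← splπ_f_zero]; exact hx
        have hxI : x ∈ I := by
          exact (Submodule.Quotient.mk_eq_zero I (x := x)).mp hx2
        have hsur : Function.Surjective (Q.π.f 0 : Q.complex.X 0 ⟶ ModuleCat.of R ↥I) :=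
          (ModuleCat.epi_iff_surjective _).mp inferInstance
        obtain ⟨q, hq⟩ := hsur ⟨x, hxI⟩
        refine ⟨q, ?_⟩
        show ((splCx I Q).d 1 0) q = x
        rw [splCx_d_one_zero]
        show I.subtype (Q.π.f 0 q) = x
        rw [hq]
        rfl
      · rw [splπ_f_zero]
        exact (ModuleCat.epi_iff_surjective _).mpr (Submodule.mkQ_surjective I)
    · rw [quasiIsoAt_iff_exactAt' (splπ I Q) (n+1)
        (ChainComplex.exactAt_succ_single_obj _ _)]
      rw [HomologicalComplex.exactAt_iff' _ (n+2) (n+1) n (by simp) (by simp)]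
      rw [ShortComplex.moduleCat_exact_iff]
      intro x hx
      match n with
      | 0 =>
        have hx' : (Q.π.f 0 : Q.complex.X 0 ⟶ ModuleCat.of R ↥I) x = 0 := by
          have : I.subtype ((Q.π.f 0 : Q.complex.X 0 ⟶ ModuleCat.of R ↥I) x) = 0 := by
            have h2 := hx
            rw [show ((splCx I Q).sc' 2 1 0).g = (splCx I Q).d 1 0 from rfl,
              splCx_d_one_zero] at h2
            exact h2
          exact Subtype.ext this
        have hex := (Qaug_exact I Q).1
        rw [ShortComplex.moduleCat_exact_iff] at hex
        obtain ⟨y, hy⟩ := hex x hx'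
        refine ⟨y, ?_⟩
        rw [show ((splCx I Q).sc' 2 1 0).f = (splCx I Q).d 2 1 from rfl, splCx_d_succ]
        exact hy
      | (m+1) =>
        have hex := Q.exact_succ m
        rw [ShortComplex.moduleCat_exact_iff] at hex
        have hx' : Q.complex.d (m+1) m x = 0 := by
          have h2 := hx
          rw [show ((splCx I Q).sc' (m+3) (m+2) (m+1)).g = (splCx I Q).d (m+2) (m+1) from rfl,
            splCx_d_succ] at h2
          exact h2
        obtain ⟨y, hy⟩ := hex x hx'
        refine ⟨y, ?_⟩
        rw [show ((splCx I Q).sc' (m+3) (m+2) (m+1)).f = (splCx I Q).d (m+3) (m+2) from rfl,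
          splCx_d_succ]
        exact hy⟩

/-- If `Tor₁(M, R ⧸ I)` vanishes then `M ⊗ I → M ⊗ R` is injective. -/
lemma key_inj (I : Ideal R) {M : Type u} [AddCommGroup M] [Module R M]
    (h : ∀ x : Tor1Mod R M (R ⧸ I), x = 0) :
    Function.Injective (LinearMap.lTensor M I.subtype) := by
  obtain ⟨Q⟩ := HasProjectiveResolution.out (Z := ModuleCat.of R ↥I)
  have e := torIso (R := R) M (R ⧸ I) (splRes I Q)
  have htriv : ∀ y : (torSC (ModuleCat.of R M) (splRes I Q)).moduleCatLeftHomologyData.H, y = 0 := by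
    intro y
    have h1 : e.inv y = 0 := h _
    have hinj : Function.Injective e.inv := (ModuleCat.mono_iff_injective e.inv).mp inferInstance
    exact hinj (by rw [h1, map_zero])
  rw [injective_iff_map_eq_zero]
  intro x hx
  set F := (tensoringLeft (ModuleCat.{u} R)).obj (ModuleCat.of R M) with hF
  set π0 : Q.complex.X 0 →ₗ[R] ↥I := (Q.π.f 0 : Q.complex.X 0 ⟶ ModuleCat.of R ↥I).hom with hπ0def
  have hπ0 : Function.Surjective π0 :=
    (ModuleCat.epi_iff_surjective (Q.π.f 0 : Q.complex.X 0 ⟶ ModuleCat.of R ↥I)).mp inferInstance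
  obtain ⟨y, hy⟩ := LinearMap.lTensor_surjective M hπ0 x
  set S := torSC (ModuleCat.of R M) (splRes I Q) with hS
  -- `y` is a cycle
  have hgS : ∀ z, S.g z = LinearMap.lTensor M I.subtype (LinearMap.lTensor M π0 z) := by
    intro z
    show (F.map ((splCx I Q).d 1 0)) z = _
    rw [splCx_d_one_zero]
    erw [Functor.map_comp]
    rfl
  have hyker : S.g y = 0 := by
    exact (hgS y).trans (by rw [hy, hx]; rfl)
  -- homology vanishes, so `y` is a boundary
  have hmem : (⟨y, by exact hyker⟩ : LinearMap.ker S.g.hom) ∈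
      LinearMap.range S.moduleCatToCycles := by
    rw [← Submodule.Quotient.mk_eq_zero]
    exact htriv _
  obtain ⟨z, hz⟩ := hmem
  have hz' : S.f z = y := congrArg Subtype.val hz
  have hfS : ∀ w, S.f w =
      LinearMap.lTensor M (Q.complex.d 1 0 : Q.complex.X 1 ⟶ Q.complex.X 0).hom w := by
    intro w
    show (F.map ((splCx I Q).d 2 1)) w = _
    rw [splCx_d_succ]
    rfl
  have hcomp : π0 ∘ₗ (Q.complex.d 1 0 : Q.complex.X 1 ⟶ Q.complex.X 0).hom = 0 :=
    congrArg ModuleCat.Hom.hom Q.complex_d_comp_π_f_zero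
  rw [← hy, ← hz', hfS]
  erw [← LinearMap.lTensor_comp_apply]
  rw [hcomp, LinearMap.lTensor_zero]
  exact LinearMap.zero_apply z

end

end StatementElevenAux

/-- Every τ_q-flat `R`-module is flat if and only if `R` is a DQ-ring, i.e. every
finitely generated semi-regular ideal of `R` equals `R`. -/
theorem statement11 (R : Type u) [CommRing R] :
    (∀ (M : Type u) [AddCommGroup M] [Module R M], IsTauQFlat R M → Module.Flat R M) ↔
      (∀ I : Ideal R, I.FG → I.IsSemiregular → I = ⊤) := by
  constructor
  · intro hmain I hFG hSR
    -- `R ⧸ I` is τ_q-flat, hence flat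
    have hann : ∀ a ∈ I, ∀ x : R ⧸ I, a • x = 0 := by
      intro a ha x
      obtain ⟨r, rfl⟩ := Submodule.Quotient.mk_surjective _ x
      rw [← Submodule.Quotient.mk_smul, Submodule.Quotient.mk_eq_zero]
      exact I.mul_mem_right r ha
    have hflat : Module.Flat R (R ⧸ I) := by
      apply hmain
      intro N _ _ m
      exact ⟨I, hFG, hSR, fun a ha =>
        StatementElevenAux.tor1_smul_eq_zero a (hann a ha) N m⟩
    -- flatness of `R ⧸ I` gives `I = I * I`
    have hsq : ∀ x ∈ I, x ∈ I * I := by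
      intro x hx
      have hinj : Function.Injective (LinearMap.rTensor (R ⧸ I) I.subtype) :=
        (Module.Flat.iff_rTensor_injective').mp hflat I
      have ht : LinearMap.rTensor (R ⧸ I) I.subtype
          ((⟨x, hx⟩ : ↥I) ⊗ₜ[R] (Submodule.Quotient.mk (1:R))) = 0 := by
        rw [LinearMap.rTensor_tmul]
        have h1 : (I.subtype ⟨x, hx⟩ : R) = x • (1 : R) := by
          simp
        rw [h1, TensorProduct.smul_tmul]
        have h2 : x • (Submodule.Quotient.mk (1:R) : R ⧸ I) = 0 := by
          rw [← Submodule.Quotient.mk_smul, Submodule.Quotient.mk_eq_zero]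
          simpa using hx
        rw [h2, TensorProduct.tmul_zero]
      have ht0 : (⟨x, hx⟩ : ↥I) ⊗ₜ[R] (Submodule.Quotient.mk (1:R)) = 0 :=
        hinj (by rw [ht, map_zero])
      -- apply the map `I ⊗ R⧸I → R ⧸ I*I`
      let g : ↥I → (R ⧸ I) →ₗ[R] (R ⧸ (I * I : Ideal R)) := fun y =>
        Submodule.liftQ I ((I * I : Ideal R).mkQ ∘ₗ LinearMap.mul R R y.1)
          (fun r hr => by
            simp only [LinearMap.mem_ker, LinearMap.comp_apply, LinearMap.mul_apply_apply,
              Submodule.mkQ_apply, Submodule.Quotient.mk_eq_zero]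
            exact Ideal.mul_mem_mul y.2 hr)
      have hg : ∀ (y : ↥I) (r : R), g y (Submodule.Quotient.mk r)
          = Submodule.Quotient.mk (y.1 * r) := fun y r => rfl
      let bil : ↥I →ₗ[R] (R ⧸ I) →ₗ[R] (R ⧸ (I * I : Ideal R)) :=
        { toFun := g
          map_add' := fun y y' => by
            apply LinearMap.ext
            intro q
            obtain ⟨r, rfl⟩ := Submodule.Quotient.mk_surjective _ q
            simp only [LinearMap.add_apply, hg, Submodule.coe_add, add_mul,
              Submodule.Quotient.mk_add]
          map_smul' := fun c y => by
            apply LinearMap.ext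
            intro q
            obtain ⟨r, rfl⟩ := Submodule.Quotient.mk_surjective _ q
            simp only [RingHom.id_apply, LinearMap.smul_apply, hg, Submodule.coe_smul,
              smul_eq_mul, mul_assoc, ← Submodule.Quotient.mk_smul] }
      have := congrArg (TensorProduct.lift bil) ht0
      rw [map_zero, TensorProduct.lift.tmul] at this
      have hx2 : (Submodule.Quotient.mk (x * 1) : R ⧸ (I * I : Ideal R)) = 0 := this
      rw [mul_one, Submodule.Quotient.mk_eq_zero] at hx2
      exact hx2
    -- Nakayama + density
    have hIJ : (I : Submodule R R) ≤ I • (I : Submodule R R) := by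
      rw [Ideal.smul_eq_mul]
      exact fun x hx => hsq x hx
    obtain ⟨r, hr1, hr2⟩ :=
      Submodule.exists_sub_one_mem_and_smul_eq_zero_of_fg_of_le_smul I I hFG hIJ
    obtain ⟨J, hJI, hJfg, hJann⟩ := hSR
    have hr0 : r = 0 := by
      have hmem : r ∈ Submodule.annihilator J :=
        Submodule.mem_annihilator.mpr (fun n hn => hr2 n (hJI hn))
      rwa [hJann, Submodule.mem_bot] at hmem
    have hone : (-1 : R) ∈ I := by simpa [hr0] using hr1
    rw [Ideal.eq_top_iff_one]
    simpa using I.neg_mem hone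
  · intro hDQ M _ _ hτ
    have htriv : ∀ (N : Type u) [AddCommGroup N] [Module R N] (x : Tor1Mod R M N), x = 0 := by
      intro N _ _ x
      obtain ⟨I, hFG, hSR, hann⟩ := hτ N x
      have hI : I = ⊤ := hDQ I hFG hSR
      have h1 := hann 1 (hI ▸ Submodule.mem_top)
      simpa using h1
    rw [Module.Flat.iff_lTensor_injective]
    intro I _
    exact StatementElevenAux.key_inj I (fun x => htriv (R ⧸ I) x)
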